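/- Let m ≥ 2 and let d_1, ..., d_m be positive integers with d_1 + ⋯ + d_m = 2(m-1). Then the number of trees on the vertex set {1, ..., m} in which vertex i has degree d_i for every i equals (m-2)! / ((d_1 - 1)! ⋯ (d_m - 1)!). -/

import Mathlib

open Classical


open Finset Nat

lemma my_multinomial_map {α β : Type*} (e : α ↪ β) (s : Finset α) (f : β → ℕ) :
    Nat.multinomial (s.map e) f = Nat.multinomial s (f ∘ e) := by
  simp [Nat.multinomial, Finset.sum_map, Finset.prod_map, Function.comp]

lemma my_multinomial_erase_zero {α : Type*} [DecidableEq α] (s : Finset α) (f : α → ℕ)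
    (a : α) (ha : a ∈ s) (hfa : f a = 0) :
    Nat.multinomial s f = Nat.multinomial (s.erase a) f := by
  conv_lhs => rw [← Finset.insert_erase ha]
  rw [Nat.multinomial_insert (Finset.notMem_erase a s), hfa]
  simp

lemma my_multinomial_rec {α : Type*} [DecidableEq α] (s : Finset α) (f : α → ℕ) (t : ℕ)
    (h : ∑ i ∈ s, f i = t + 1) :
    Nat.multinomial s f
      = ∑ k ∈ s.filter (fun k => f k ≠ 0), Nat.multinomial s (Function.update f k (f k - 1)) := by
  have hpos : 0 < ∏ i ∈ s, (f i)! := Finset.prod_pos fun i _ => Nat.factorial_pos _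
  apply Nat.eq_of_mul_eq_mul_left hpos
  rw [Nat.multinomial_spec, h, Finset.mul_sum]
  have key : ∀ k ∈ s.filter (fun k => f k ≠ 0),
      (∏ i ∈ s, (f i)!) * Nat.multinomial s (Function.update f k (f k - 1)) = f k * t ! := by
    intro k hk
    rw [Finset.mem_filter] at hk
    obtain ⟨hks, hfk⟩ := hk
    have hprod : ∏ i ∈ s, (f i)!
        = f k * ∏ i ∈ s, ((Function.update f k (f k - 1)) i)! := by
      have : ∀ i ∈ s, ((Function.update f k (f k - 1)) i)!
          = Function.update (fun i => (f i)!) k ((f k - 1)!) i := by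
        intro i _
        exact (Function.apply_update (fun _ n => n !) f k (f k - 1) i)
      rw [Finset.prod_congr rfl this, Finset.prod_update_of_mem hks,
        ← Finset.mul_prod_erase s (fun i => (f i)!) hks, ← mul_assoc,
        Finset.sdiff_singleton_eq_erase]
      congr 1
      obtain ⟨n, hn⟩ := Nat.exists_eq_succ_of_ne_zero hfk
      rw [hn]
      simp [Nat.factorial_succ]
    have hsum' : ∑ i ∈ s, (Function.update f k (f k - 1)) i = t := by
      rw [Finset.sum_update_of_mem hks, Finset.sdiff_singleton_eq_erase]
      have := Finset.add_sum_erase s f hks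
      omega
    rw [hprod, mul_assoc, Nat.multinomial_spec, hsum']
  rw [Finset.sum_congr rfl key, ← Finset.sum_mul, Finset.sum_filter_ne_zero, h,
    ← Nat.factorial_succ]

open Finset Nat SimpleGraph Walk Classical

variable {V : Type} [Fintype V] [DecidableEq V]

lemma cycle_two_neighbors {G : SimpleGraph V} {v : V} {c : G.Walk v v} (hc : c.IsCycle) :
    ∃ x y, x ≠ y ∧ G.Adj v x ∧ G.Adj v y := by
  cases c with
  | nil => exact absurd rfl hc.ne_nil
  | @cons _ u _ h q =>
    have h3 := hc.three_le_length
    rw [Walk.length_cons] at h3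
    have hq : q.darts ≠ [] := by
      intro hnil
      have : q.length = 0 := by
        have := congrArg List.length hnil
        simpa [Walk.length_darts] using this
      omega
    set dl := q.darts.getLast hq with hdl
    have hsnd : dl.snd = v := by rw [hdl, Walk.getLast_darts_eq_lastDart]; simp
    refine ⟨u, dl.fst, ?_, h, ?_⟩
    · intro heq
      have hmem : dl.edge ∈ q.edges := List.mem_map_of_mem (List.getLast_mem hq)
      have hedge : dl.edge = s(v, u) := by
        have : dl.edge = s(dl.fst, dl.snd) := rfl
        rw [this, hsnd, ← heq, Sym2.eq_swap]
      have hnodup := hc.edges_nodup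
      rw [Walk.edges_cons, List.nodup_cons] at hnodup
      exact hnodup.1 (hedge ▸ hmem)
    · have := dl.adj
      rw [hsnd] at this
      exact this.symm

lemma firstEdge_mem {G : SimpleGraph V} {a b : V} (p : G.Walk a b) (hp : ¬p.Nil) :
    s(a, p.getVert 1) ∈ p.edges := by
  cases p with
  | nil => simp at hp
  | cons h q => simp [Walk.edges_cons, Walk.getVert_cons_succ]

lemma path_avoids {G : SimpleGraph V} {j k a b : V} (huniq : ∀ x, G.Adj j x → x = k)
    (p : G.Walk a b) (hp : p.IsPath) (ha : a ≠ j) (hb : b ≠ j) : j ∉ p.support := by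
  intro hj
  set t := p.takeUntil j hj with ht
  set r := p.dropUntil j hj with hr
  have hpspec : t.append r = p := p.take_spec hj
  have hrnil : ¬r.Nil := Walk.not_nil_of_ne (Ne.symm hb)
  have htnil : ¬t.reverse.Nil := Walk.not_nil_of_ne (fun h => ha h.symm)
  have hx : G.Adj j (r.getVert 1) := r.adj_snd hrnil
  have hy : G.Adj j (t.reverse.getVert 1) := t.reverse.adj_snd htnil
  have hxk : r.getVert 1 = k := huniq _ hx
  have hyk : t.reverse.getVert 1 = k := huniq _ hy
  have hxe : s(j, k) ∈ r.edges := hxk ▸ firstEdge_mem r hrnil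
  have hye : s(j, k) ∈ t.edges := by
    have := hyk ▸ firstEdge_mem t.reverse htnil
    rwa [Walk.edges_reverse, List.mem_reverse] at this
  have hnodup : p.edges.Nodup := hp.isTrail.edges_nodup
  rw [← hpspec, Walk.edges_append, List.nodup_append] at hnodup
  exact hnodup.2.2 _ hye _ hxe rfl

variable (j : V)

/-- Attach a pendant vertex `j` to `k` in a graph on the complement of `j`. -/
def attachG (k : {i : V // i ≠ j}) (G' : SimpleGraph {i : V // i ≠ j}) : SimpleGraph V where
  Adj a b := (∃ (ha : a ≠ j) (hb : b ≠ j), G'.Adj ⟨a, ha⟩ ⟨b, hb⟩)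
    ∨ (a = j ∧ b = k.1) ∨ (a = k.1 ∧ b = j)
  symm := by
    constructor
    rintro a b (⟨ha, hb, hadj⟩ | ⟨rfl, rfl⟩ | ⟨rfl, rfl⟩)
    · exact Or.inl ⟨hb, ha, hadj.symm⟩
    · exact Or.inr (Or.inr ⟨rfl, rfl⟩)
    · exact Or.inr (Or.inl ⟨rfl, rfl⟩)
  loopless := by
    constructor
    rintro a (⟨ha, hb, hadj⟩ | ⟨rfl, h⟩ | ⟨h, rfl⟩)
    · exact G'.loopless.irrefl _ hadj
    · exact k.2 h.symm
    · exact k.2 h.symm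

/-- Restrict a graph on `V` to the complement of `j`. -/
def detachG (G : SimpleGraph V) : SimpleGraph {i : V // i ≠ j} :=
  G.comap (Function.Embedding.subtype _)

lemma detachG_adj (G : SimpleGraph V) (a b : {i : V // i ≠ j}) :
    (detachG j G).Adj a b ↔ G.Adj a.1 b.1 := Iff.rfl

lemma detach_attach (k : {i : V // i ≠ j}) (G' : SimpleGraph {i : V // i ≠ j}) :
    detachG j (attachG j k G') = G' := by
  ext ⟨a, ha⟩ ⟨b, hb⟩
  simp only [detachG_adj]
  constructor
  · rintro (⟨ha', hb', hadj⟩ | ⟨rfl, rfl⟩ | ⟨rfl, rfl⟩)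
    · exact hadj
    · exact absurd rfl ha
    · exact absurd rfl hb
  · intro h
    exact Or.inl ⟨ha, hb, h⟩

lemma attachG_adj_j (k : {i : V // i ≠ j}) (G' : SimpleGraph {i : V // i ≠ j}) (b : V) :
    (attachG j k G').Adj j b ↔ b = k.1 := by
  constructor
  · rintro (⟨ha, _, _⟩ | ⟨_, rfl⟩ | ⟨h, _⟩)
    · exact absurd rfl ha
    · rfl
    · exact absurd h.symm k.2
  · rintro rfl
    exact Or.inr (Or.inl ⟨rfl, rfl⟩)

lemma attachG_adj_of_ne (k : {i : V // i ≠ j}) (G' : SimpleGraph {i : V // i ≠ j})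
    {a b : V} (ha : a ≠ j) (hb : b ≠ j) :
    (attachG j k G').Adj a b ↔ G'.Adj ⟨a, ha⟩ ⟨b, hb⟩ := by
  constructor
  · rintro (⟨ha', hb', hadj⟩ | ⟨rfl, rfl⟩ | ⟨rfl, rfl⟩)
    · exact hadj
    · exact absurd rfl ha
    · exact absurd rfl hb
  · intro h
    exact Or.inl ⟨ha, hb, h⟩

/-- The inclusion homomorphism from `G'` to the attached graph. -/
def attachHom (k : {i : V // i ≠ j}) (G' : SimpleGraph {i : V // i ≠ j}) :
    G' →g attachG j k G' where
  toFun := Subtype.val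
  map_rel' := fun {a b} h => Or.inl ⟨a.2, b.2, by simpa⟩

/-- Lift a walk avoiding `j` to the subtype graph. -/
def liftWalk {G : SimpleGraph V} : {a b : V} → (p : G.Walk a b) →
    (hp : ∀ x ∈ p.support, x ≠ j) →
    (G.comap (Function.Embedding.subtype (· ≠ j))).Walk
      ⟨a, hp a p.start_mem_support⟩ ⟨b, hp b p.end_mem_support⟩
  | _, _, Walk.nil, _ => Walk.nil
  | _, _, Walk.cons h q, hp =>
      Walk.cons (by exact h) (liftWalk q (fun x hx => hp x (by simp [hx])))

lemma liftWalk_map {G : SimpleGraph V} {a b : V} (p : G.Walk a b)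
    (hp : ∀ x ∈ p.support, x ≠ j) :
    (liftWalk j p hp).map
      (SimpleGraph.Embedding.comap (Function.Embedding.subtype (· ≠ j)) G).toHom = p := by
  induction p with
  | nil => rfl
  | cons h q ih =>
    exact congrArg (Walk.cons h) (ih _)

lemma subtypeval_injective : Function.Injective (fun x : {i : V // i ≠ j} => x.1) :=
  Subtype.val_injective

section NeighborFinsets

variable (k : {i : V // i ≠ j}) (G' : SimpleGraph {i : V // i ≠ j})

lemma attachG_neighborFinset_j :
    (attachG j k G').neighborFinset j = {k.1} := by
  ext b
  simp [SimpleGraph.mem_neighborFinset, attachG_adj_j]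

lemma attachG_degree_j : (attachG j k G').degree j = 1 := by
  rw [SimpleGraph.degree, attachG_neighborFinset_j]
  simp

lemma attachG_neighborFinset_of_ne {i : V} (hi : i ≠ j) (hik : i ≠ k.1) :
    (attachG j k G').neighborFinset i
      = (G'.neighborFinset ⟨i, hi⟩).map (Function.Embedding.subtype _) := by
  ext b
  simp only [SimpleGraph.mem_neighborFinset, Finset.mem_map,
    Function.Embedding.coe_subtype]
  constructor
  · rintro (⟨ha', hb', hadj⟩ | ⟨h, rfl⟩ | ⟨rfl, rfl⟩)
    · exact ⟨⟨b, hb'⟩, by simpa using hadj, rfl⟩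
    · exact absurd h hi
    · exact absurd rfl hik
  · rintro ⟨⟨b', hb'⟩, hadj, rfl⟩
    exact Or.inl ⟨hi, hb', by simpa using hadj⟩

lemma attachG_degree_of_ne {i : V} (hi : i ≠ j) (hik : i ≠ k.1) :
    (attachG j k G').degree i = G'.degree ⟨i, hi⟩ := by
  rw [SimpleGraph.degree, attachG_neighborFinset_of_ne j k G' hi hik, Finset.card_map]
  rfl

lemma attachG_neighborFinset_k :
    (attachG j k G').neighborFinset k.1
      = insert j ((G'.neighborFinset k).map (Function.Embedding.subtype _)) := by
  ext b
  simp only [SimpleGraph.mem_neighborFinset, Finset.mem_insert, Finset.mem_map,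
    Function.Embedding.coe_subtype]
  constructor
  · rintro (⟨ha', hb', hadj⟩ | ⟨h, rfl⟩ | ⟨_, rfl⟩)
    · exact Or.inr ⟨⟨b, hb'⟩, by simpa using hadj, rfl⟩
    · exact absurd h k.2
    · exact Or.inl rfl
  · rintro (rfl | ⟨⟨b', hb'⟩, hadj, rfl⟩)
    · exact Or.inr (Or.inr ⟨rfl, rfl⟩)
    · exact Or.inl ⟨k.2, hb', by simpa using hadj⟩

lemma attachG_degree_k : (attachG j k G').degree k.1 = G'.degree k + 1 := by
  rw [SimpleGraph.degree, attachG_neighborFinset_k, Finset.card_insert_of_notMem, Finset.card_map]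
  · rfl
  · simp only [Finset.mem_map, Function.Embedding.coe_subtype, not_exists]
    rintro ⟨b', hb'⟩ ⟨_, h⟩
    exact hb' h

end NeighborFinsets

theorem attachG_isTree (k : {i : V // i ≠ j}) (G' : SimpleGraph {i : V // i ≠ j})
    (hG' : G'.IsTree) : (attachG j k G').IsTree := by
  constructor
  · have hne : Nonempty V := ⟨j⟩
    apply SimpleGraph.Connected.mk
    have hreach : ∀ a : V, (attachG j k G').Reachable a j := by
      intro a
      rcases eq_or_ne a j with rfl | haj
      · exact SimpleGraph.Reachable.refl _
      · have h1 := hG'.isConnected.preconnected ⟨a, haj⟩ k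
        have h2 : (attachG j k G').Reachable a k.1 := h1.map (attachHom j k G')
        exact h2.trans (SimpleGraph.Adj.reachable (Or.inr (Or.inr ⟨rfl, rfl⟩)))
    intro a b
    exact (hreach a).trans (hreach b).symm
  · intro v c hc
    by_cases hj : j ∈ c.support
    · have hc' := hc.rotate hj
      obtain ⟨x, y, hxy, hx, hy⟩ := cycle_two_neighbors hc'
      rw [attachG_adj_j] at hx hy
      exact hxy (hx.trans hy.symm)
    · have hsup : ∀ x ∈ c.support, x ≠ j := fun x hx h => hj (h ▸ hx)
      set c' := liftWalk j c hsup with hc'def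
      have hmap := liftWalk_map j c hsup
      have hcyc : c'.IsCycle := by
        rw [← hc'def] at hmap
        rw [← hmap] at hc
        exact (Walk.map_isCycle_iff_of_injective (by exact Subtype.val_injective)).mp hc
      have hacyc : ((attachG j k G').comap
          (Function.Embedding.subtype (· ≠ j))).IsAcyclic := by
        have heq : (attachG j k G').comap (Function.Embedding.subtype (· ≠ j)) = G' :=
          detach_attach j k G'
        rw [heq]
        exact hG'.2
      exact hacyc c' hcyc

theorem detachG_isTree (G : SimpleGraph V) (hG : G.IsTree) (k : {i : V // i ≠ j})
    (hk : G.Adj j k.1) (huniq : ∀ x, G.Adj j x → x = k.1) : (detachG j G).IsTree := by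
  constructor
  · have hne : Nonempty {i : V // i ≠ j} := ⟨k⟩
    apply SimpleGraph.Connected.mk
    intro a b
    obtain ⟨w⟩ := hG.isConnected.preconnected a.1 b.1
    let p := w.toPath
    have hav : j ∉ p.1.support := path_avoids huniq p.1 p.2 a.2 b.2
    have hsup : ∀ x ∈ p.1.support, x ≠ j := fun x hx h => hav (h ▸ hx)
    exact ⟨liftWalk j p.1 hsup⟩
  · intro v c hc
    exact hG.2 _ ((Walk.map_isCycle_iff_of_injective
      (f := (SimpleGraph.Embedding.comap (Function.Embedding.subtype (· ≠ j)) G).toHom)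
      (by exact Subtype.val_injective)).mpr hc)

theorem attach_detach (G : SimpleGraph V) (k : {i : V // i ≠ j})
    (hk : G.Adj j k.1) (huniq : ∀ x, G.Adj j x → x = k.1) :
    attachG j k (detachG j G) = G := by
  ext a b
  constructor
  · rintro (⟨ha, hb, hadj⟩ | ⟨rfl, rfl⟩ | ⟨rfl, rfl⟩)
    · exact hadj
    · exact hk
    · exact hk.symm
  · intro h
    by_cases haj : a = j
    · subst haj
      exact Or.inr (Or.inl ⟨rfl, huniq _ h⟩)
    · by_cases hbj : b = j
      · subst hbj
        exact Or.inr (Or.inr ⟨huniq _ h.symm, rfl⟩)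
      · exact Or.inl ⟨haj, hbj, h⟩

lemma detachG_degree_of_ne (G : SimpleGraph V) (k : {i : V // i ≠ j})
    (hk : G.Adj j k.1) (huniq : ∀ x, G.Adj j x → x = k.1)
    (i : {i : V // i ≠ j}) (hik : i ≠ k) :
    (detachG j G).degree i = G.degree i.1 := by
  conv_rhs => rw [← attach_detach j G k hk huniq]
  rw [attachG_degree_of_ne j k _ i.2 (fun h => hik (Subtype.ext h))]

lemma detachG_degree_k (G : SimpleGraph V) (k : {i : V // i ≠ j})
    (hk : G.Adj j k.1) (huniq : ∀ x, G.Adj j x → x = k.1) :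
    (detachG j G).degree k = G.degree k.1 - 1 := by
  have h := attachG_degree_k j k (detachG j G)
  rw [attach_detach j G k hk huniq] at h
  omega

lemma exists_unique_nbr (G : SimpleGraph V) (hdeg : G.degree j = 1) :
    ∃ k : {i : V // i ≠ j}, G.Adj j k.1 ∧ ∀ x, G.Adj j x → x = k.1 := by
  rw [SimpleGraph.degree, Finset.card_eq_one] at hdeg
  obtain ⟨a, ha⟩ := hdeg
  have hadj : G.Adj j a := by
    rw [← SimpleGraph.mem_neighborFinset, ha]; exact Finset.mem_singleton_self a
  refine ⟨⟨a, fun h => G.loopless.irrefl j (h ▸ hadj)⟩, hadj, ?_⟩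
  intro x hx
  have := (SimpleGraph.mem_neighborFinset G j x).mpr hx
  rw [ha, Finset.mem_singleton] at this
  exact this

lemma degree_pos_of_connected (G : SimpleGraph V) (hG : G.Connected)
    (h2 : 2 ≤ Fintype.card V) (v : V) : 0 < G.degree v := by
  obtain ⟨w, hw⟩ := Fintype.exists_ne_of_one_lt_card (by omega) v
  obtain ⟨p⟩ := hG.preconnected v w
  have hnil : ¬p.Nil := Walk.not_nil_of_ne (fun h => hw h.symm)
  exact (SimpleGraph.degree_pos_iff_exists_adj _ _).mpr ⟨_, p.adj_snd hnil⟩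

lemma map_univ_subtype_ne (j : V) :
    (univ : Finset {i : V // i ≠ j}).map (Function.Embedding.subtype _)
      = univ.erase j := by
  ext x
  simp [Finset.mem_erase]

lemma top_isTree_of_card_two (h2 : Fintype.card V = 2) : (⊤ : SimpleGraph V).IsTree := by
  constructor
  · have : Nonempty V := Fintype.card_pos_iff.mp (by omega)
    apply SimpleGraph.Connected.mk
    intro a b
    rcases eq_or_ne a b with rfl | hab
    · exact SimpleGraph.Reachable.refl _
    · exact SimpleGraph.Adj.reachable hab
  · intro v c hc
    have h3 := hc.three_le_length
    have hnd := hc.support_nodup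
    have hlen : c.support.tail.length = c.length := by
      have := c.length_support
      have : c.support.tail.length = c.support.length - 1 := by simp
      omega
    have := hnd.length_le_card
    omega

lemma tree_card_two_eq_top (h2 : Fintype.card V = 2) {G : SimpleGraph V}
    (hG : G.IsTree) : G = ⊤ := by
  ext a b
  simp only [SimpleGraph.top_adj]
  constructor
  · exact SimpleGraph.Adj.ne
  · intro hab
    obtain ⟨p⟩ := hG.isConnected.preconnected a b
    have hnil : ¬p.Nil := Walk.not_nil_of_ne hab
    have hadj : G.Adj a (p.getVert 1) := p.adj_snd hnil
    have hne : p.getVert 1 ≠ a := fun h => G.loopless.irrefl a (by rw [h] at hadj; exact hadj)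
    have huniv : ({a, b} : Finset V) = univ := by
      apply Finset.eq_univ_of_card
      rw [Finset.card_insert_of_notMem (by simpa using hab), Finset.card_singleton, h2]
    have : p.getVert 1 ∈ ({a, b} : Finset V) := huniv ▸ Finset.mem_univ _
    rcases Finset.mem_insert.mp this with h | h
    · exact absurd h hne
    · rw [Finset.mem_singleton] at h
      rw [h] at hadj
      exact hadj

theorem aux_count : ∀ (n : ℕ), ∀ (V : Type) [Fintype V] [DecidableEq V],
    Fintype.card V = n → 2 ≤ n →
    ∀ d : V → ℕ, (∀ i, 1 ≤ d i) → (∑ i, d i = 2 * (n - 1)) →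
    (Finset.univ.filter (fun G : SimpleGraph V => G.IsTree ∧ ∀ i, G.degree i = d i)).card
      = Nat.multinomial Finset.univ (fun i => d i - 1) := by
  intro n
  induction n using Nat.strong_induction_on with
  | _ n IH =>
  intro V _ _ hcard hn d hd hsum
  rcases eq_or_lt_of_le hn with h2 | h3
  · -- base case : n = 2
    have h2 : Fintype.card V = 2 := by omega
    have hd1 : ∀ i, d i = 1 := by
      intro v
      have he := Finset.add_sum_erase univ d (mem_univ v)
      have hle : (univ.erase v).card • 1 ≤ ∑ i ∈ univ.erase v, d i :=
        Finset.card_nsmul_le_sum _ _ _ (fun i _ => hd i)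
      rw [Finset.card_erase_of_mem (mem_univ v), Finset.card_univ, h2] at hle
      have h1 := hd v
      simp only [smul_eq_mul] at hle
      omega
    have hfilter : Finset.univ.filter
        (fun G : SimpleGraph V => G.IsTree ∧ ∀ i, G.degree i = d i) = {⊤} := by
      ext G
      simp only [Finset.mem_filter, Finset.mem_univ, true_and, Finset.mem_singleton]
      constructor
      · rintro ⟨hT, _⟩
        exact tree_card_two_eq_top h2 hT
      · rintro rfl
        refine ⟨top_isTree_of_card_two h2, fun i => ?_⟩
        have hcg := SimpleGraph.complete_graph_degree (V := V) i
        rw [h2] at hcg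
        rw [hd1]
        convert hcg using 2
    rw [hfilter, Finset.card_singleton]
    have : (fun i : V => d i - 1) = fun _ => 0 := by
      funext i; rw [hd1]
    rw [this]
    simp [Nat.multinomial]
  · -- inductive step : n ≥ 3
    have h3 : 3 ≤ n := h3
    -- find a leaf value
    have hex : ∃ j, d j = 1 := by
      by_contra hno
      push_neg at hno
      have : ∀ i ∈ (univ : Finset V), 2 ≤ d i := by
        intro i _
        have := hno i
        have := hd i
        omega
      have hle : (univ : Finset V).card • 2 ≤ ∑ i, d i :=
        Finset.card_nsmul_le_sum _ _ _ this
      rw [Finset.card_univ, hcard] at hle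
      simp only [smul_eq_mul] at hle
      omega
    obtain ⟨j, hdj⟩ := hex
    have hcard' : Fintype.card {i : V // i ≠ j} = n - 1 := by
      have := Fintype.card_subtype_compl (fun i : V => i = j)
      rw [Fintype.card_subtype_eq] at this
      simpa [hcard] using this
    -- sum of d over the subtype
    have hsum' : ∑ i : {i : V // i ≠ j}, d i.1 = 2 * (n - 1) - 1 := by
      have : ∑ i ∈ univ.erase j, d i = ∑ i : {i : V // i ≠ j}, d i.1 := by
        rw [← map_univ_subtype_ne j, Finset.sum_map]
        rfl
      have he := Finset.add_sum_erase univ d (mem_univ j)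
      omega
    set d' : {i : V // i ≠ j} → {i : V // i ≠ j} → ℕ :=
      fun k i => if i = k then d k.1 - 1 else d i.1 with hd'
    set S := Finset.univ.filter
      (fun G : SimpleGraph V => G.IsTree ∧ ∀ i, G.degree i = d i) with hS
    set Sk : {i : V // i ≠ j} → Finset (SimpleGraph V) :=
      fun k => S.filter (fun G => G.Adj j k.1) with hSk
    set Tk : {i : V // i ≠ j} → Finset (SimpleGraph {i : V // i ≠ j}) :=
      fun k => Finset.univ.filter
        (fun G' : SimpleGraph {i : V // i ≠ j} =>
          G'.IsTree ∧ ∀ i, G'.degree i = d' k i) with hTk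
    -- membership helper
    have hmemS : ∀ G ∈ S, G.IsTree ∧ ∀ i, G.degree i = d i := by
      intro G hG
      rw [hS, Finset.mem_filter] at hG
      exact hG.2
    -- step A : card S = ∑ k, card (Sk k)
    have stepA : S.card = ∑ k : {i : V // i ≠ j}, (Sk k).card := by
      rw [← Finset.card_biUnion]
      · congr 1
        ext G
        simp only [Finset.mem_biUnion, Finset.mem_univ, true_and]
        constructor
        · intro hG
          obtain ⟨hT, hdeg⟩ := hmemS G hG
          obtain ⟨k, hk, _⟩ := exists_unique_nbr j G (by rw [hdeg j, hdj])
          exact ⟨k, by rw [hSk]; exact Finset.mem_filter.mpr ⟨hG, hk⟩⟩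
        · rintro ⟨k, hk⟩
          rw [hSk] at hk
          exact (Finset.mem_filter.mp hk).1
      · intro k _ k' _ hkk'
        rw [Function.onFun, Finset.disjoint_left]
        intro G hGk hGk'
        rw [hSk, Finset.mem_filter] at hGk hGk'
        obtain ⟨hT, hdeg⟩ := hmemS G hGk.1
        obtain ⟨k0, _, huniq⟩ := exists_unique_nbr j G (by rw [hdeg j, hdj])
        exact hkk' (Subtype.ext ((huniq _ hGk.2).trans (huniq _ hGk'.2).symm))
    -- step B : card (Sk k) = card (Tk k)
    have stepB : ∀ k : {i : V // i ≠ j}, (Sk k).card = (Tk k).card := by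
      intro k
      apply Finset.card_bij' (fun G _ => detachG j G) (fun G' _ => attachG j k G')
      · -- forward membership
        intro G hG
        rw [hSk, Finset.mem_filter] at hG
        obtain ⟨hGS, hadj⟩ := hG
        obtain ⟨hT, hdeg⟩ := hmemS G hGS
        obtain ⟨k0, hk0, huniq⟩ := exists_unique_nbr j G (by rw [hdeg j, hdj])
        have hkk0 : k = k0 := Subtype.ext (huniq _ hadj)
        subst hkk0
        rw [hTk, Finset.mem_filter]
        refine ⟨Finset.mem_univ _, detachG_isTree j G hT k hk0 huniq, ?_⟩
        intro i
        rcases eq_or_ne i k with rfl | hik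
        · rw [detachG_degree_k j G i hk0 huniq, hdeg]
          simp [hd']
        · rw [detachG_degree_of_ne j G k hk0 huniq i hik, hdeg]
          simp [hd', hik]
      · -- backward membership
        intro G' hG'
        rw [hTk, Finset.mem_filter] at hG'
        obtain ⟨_, hT', hdeg'⟩ := hG'
        rw [hSk, Finset.mem_filter]
        refine ⟨?_, Or.inr (Or.inl ⟨rfl, rfl⟩)⟩
        rw [hS, Finset.mem_filter]
        refine ⟨Finset.mem_univ _, attachG_isTree j k G' hT', ?_⟩
        intro i
        rcases eq_or_ne i j with rfl | hij
        · rw [attachG_degree_j, hdj]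
        · rcases eq_or_ne i k.1 with rfl | hik
          · rw [attachG_degree_k, hdeg' k]
            have := hd k.1
            simp only [hd', if_pos rfl]
            omega
          · rw [attachG_degree_of_ne j k G' hij hik, hdeg' ⟨i, hij⟩]
            simp only [hd']
            rw [if_neg ?_]
            intro h
            exact hik (congrArg Subtype.val h)
      · -- left inverse
        intro G hG
        rw [hSk, Finset.mem_filter] at hG
        obtain ⟨hGS, hadj⟩ := hG
        obtain ⟨hT, hdeg⟩ := hmemS G hGS
        obtain ⟨k0, hk0, huniq⟩ := exists_unique_nbr j G (by rw [hdeg j, hdj])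
        have hkk0 : k = k0 := Subtype.ext (huniq _ hadj)
        subst hkk0
        exact attach_detach j G k hk0 huniq
      · -- right inverse
        intro G' _
        exact detach_attach j k G'
    -- Tk k is empty if d k = 1
    have hTkempty : ∀ k : {i : V // i ≠ j}, d k.1 = 1 → (Tk k).card = 0 := by
      intro k hk1
      rw [Finset.card_eq_zero, Finset.eq_empty_iff_forall_notMem]
      intro G' hG'
      rw [hTk, Finset.mem_filter] at hG'
      obtain ⟨_, hT', hdeg'⟩ := hG'
      have hpos := degree_pos_of_connected G' hT'.isConnected (by omega) k
      rw [hdeg' k, hd'] at hpos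
      simp [hk1] at hpos
    -- apply IH to Tk k for d k ≥ 2
    have stepC : ∀ k : {i : V // i ≠ j}, 2 ≤ d k.1 →
        (Tk k).card = Nat.multinomial Finset.univ (fun i => d' k i - 1) := by
      intro k hk2
      rw [hTk]
      apply IH (n - 1) (by omega) _ hcard' (by omega)
      · intro i
        rw [hd']
        rcases eq_or_ne i k with rfl | hik
        · simp; omega
        · simp [hik]; exact hd i.1
      · have key : ∑ i : {i : V // i ≠ j}, d' k i
            = (∑ i : {i : V // i ≠ j}, d i.1) - 1 := by
          have he : d' k k + ∑ i ∈ univ.erase k, d' k i = ∑ i : {i : V // i ≠ j}, d' k i :=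
            Finset.add_sum_erase univ (d' k) (mem_univ k)
          have he2 : d k.1 + ∑ i ∈ univ.erase k, d i.1
              = ∑ i : {i : V // i ≠ j}, d i.1 :=
            Finset.add_sum_erase univ (fun i : {i : V // i ≠ j} => d i.1) (mem_univ k)
          have hcong : ∑ i ∈ univ.erase k, d' k i
              = ∑ i ∈ univ.erase k, d i.1 := by
            apply Finset.sum_congr rfl
            intro i hi
            simp [hd', Finset.ne_of_mem_erase hi]
          have hkk : d' k k = d k.1 - 1 := by simp [hd']
          omega
        rw [key, hsum']
        omega
    -- combine
    rw [stepA]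
    have hsplit : ∑ k : {i : V // i ≠ j}, (Sk k).card
        = ∑ k ∈ Finset.univ.filter (fun k : {i : V // i ≠ j} => 2 ≤ d k.1),
            Nat.multinomial Finset.univ (fun i => d' k i - 1) := by
      rw [← Finset.sum_filter_add_sum_filter_not Finset.univ
        (fun k : {i : V // i ≠ j} => 2 ≤ d k.1)]
      have hzero : ∑ k ∈ Finset.univ.filter
          (fun k : {i : V // i ≠ j} => ¬ 2 ≤ d k.1), (Sk k).card = 0 := by
        apply Finset.sum_eq_zero
        intro k hk
        rw [Finset.mem_filter] at hk
        have hk1 : d k.1 = 1 := by have := hd k.1; omega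
        rw [stepB k]
        exact hTkempty k hk1
      rw [hzero, add_zero]
      apply Finset.sum_congr rfl
      intro k hk
      rw [Finset.mem_filter] at hk
      rw [stepB k, stepC k hk.2]
    rw [hsplit]
    -- now the multinomial identity
    have hfj : d j - 1 = 0 := by omega
    rw [my_multinomial_erase_zero univ (fun i => d i - 1) j (mem_univ j) hfj]
    have hsumerase : ∑ i ∈ univ.erase j, (d i - 1) = (n - 3) + 1 := by
      have he : (d j - 1) + ∑ i ∈ univ.erase j, (d i - 1) = ∑ i : V, (d i - 1) :=
        Finset.add_sum_erase univ (fun i => d i - 1) (mem_univ j)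
      have hsub : ∑ i : V, d i = (∑ i : V, (d i - 1)) + Fintype.card V := by
        have h1 : ∑ i : V, d i = ∑ i : V, ((d i - 1) + 1) :=
          Finset.sum_congr rfl (fun i _ => by have := hd i; omega)
        rw [h1, Finset.sum_add_distrib, Finset.sum_const, Finset.card_univ, smul_eq_mul,
          mul_one]
      rw [hsum, hcard] at hsub
      omega
    rw [my_multinomial_rec (univ.erase j) (fun i => d i - 1) (n - 3) hsumerase]
    -- reindex the sum
    refine Finset.sum_bij' (fun (k : {i : V // i ≠ j}) _ => k.1)
      (fun k hk => ⟨k, (Finset.mem_erase.mp (Finset.mem_filter.mp hk).1).1⟩)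
      ?_ ?_ ?_ ?_ ?_
    · intro k hk
      rw [Finset.mem_filter] at hk
      rw [Finset.mem_filter, Finset.mem_erase]
      refine ⟨⟨k.2, Finset.mem_univ _⟩, ?_⟩
      have := hk.2
      simp only [ne_eq]
      omega
    · intro k hk
      rw [Finset.mem_filter] at hk ⊢
      refine ⟨Finset.mem_univ _, ?_⟩
      have := hk.2
      have := hd k
      simp only at this ⊢
      omega
    · intro k _
      rfl
    · intro k _
      rfl
    · intro k hk
      rw [← map_univ_subtype_ne j, my_multinomial_map]
      apply Nat.multinomial_congr
      intro i _
      simp only [Function.comp_apply, Function.Embedding.coe_subtype, Function.update_apply,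
        hd']
      by_cases hik : i = k
      · rw [if_pos hik, if_pos (congrArg Subtype.val hik)]
      · rw [if_neg hik, if_neg (fun h => hik (Subtype.ext h))]



/-- **Trees with prescribed degree sequence.** For `m ≥ 2` and positive integers
`d 1, …, d m` summing to `2(m-1)`, the number of trees on `Fin m` in which vertex
`i` has degree `d i` for every `i` equals `(m-2)! / ((d 1 - 1)! ⋯ (d m - 1)!)`. -/
theorem card_trees_with_degree_sequence (m : ℕ) (hm : 2 ≤ m) (d : Fin m → ℕ)
    (hd : ∀ i, 1 ≤ d i) (hsum : ∑ i : Fin m, d i = 2 * (m - 1)) :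
    (Finset.univ.filter
        (fun G : SimpleGraph (Fin m) => G.IsTree ∧ ∀ i : Fin m, G.degree i = d i)).card
      = Nat.factorial (m - 2) / ∏ i : Fin m, Nat.factorial (d i - 1) := by
  have h := aux_count m (Fin m) (Fintype.card_fin m) hm d hd hsum
  have hsub : ∑ i : Fin m, (d i - 1) = m - 2 := by
    have h1 : ∑ i : Fin m, d i = ∑ i : Fin m, ((d i - 1) + 1) :=
      Finset.sum_congr rfl (fun i _ => by have := hd i; omega)
    rw [Finset.sum_add_distrib, Finset.sum_const, Finset.card_univ, Fintype.card_fin,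
      smul_eq_mul, mul_one] at h1
    omega
  rw [Nat.multinomial, hsub] at h
  refine Eq.trans ?_ h
  exact congr_arg Finset.card (by congr!)
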